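/- For every twice continuously differentiable matrix field A : ℝ³ → so(3) taking values in the skew-symmetric 3×3 matrices, Curl((Curl A)ᵀ) = −anti(∇(div(axl A))) at every point, i.e. Curl((Curl A)ᵀ) is the skew-symmetric matrix whose axial vector is minus the gradient of the divergence of axl A. -/

import Mathlib

open Matrix

/-- Partial derivative in direction `j` of a scalar field on `ℝ³`. -/
noncomputable def pd (j : Fin 3) (f : (Fin 3 → ℝ) → ℝ) (x : Fin 3 → ℝ) : ℝ :=
  fderiv ℝ f x (Pi.single j 1)

/-- Gradient of a scalar field on `ℝ³`. -/
noncomputable def grad3 (f : (Fin 3 → ℝ) → ℝ) (x : Fin 3 → ℝ) : Fin 3 → ℝ :=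
  fun i => pd i f x

/-- Classical curl of a vector field on `ℝ³`. -/
noncomputable def vcurl (v : (Fin 3 → ℝ) → Fin 3 → ℝ) (x : Fin 3 → ℝ) : Fin 3 → ℝ :=
  ![pd 1 (fun y => v y 2) x - pd 2 (fun y => v y 1) x,
    pd 2 (fun y => v y 0) x - pd 0 (fun y => v y 2) x,
    pd 0 (fun y => v y 1) x - pd 1 (fun y => v y 0) x]

/-- Divergence of a vector field on `ℝ³`. -/
noncomputable def vdiv (v : (Fin 3 → ℝ) → Fin 3 → ℝ) (x : Fin 3 → ℝ) : ℝ :=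
  ∑ i, pd i (fun y => v y i) x

/-- Row-wise Curl of a matrix field on `ℝ³`: the `i`-th row of `mCurl P`
is the curl of the `i`-th row of `P`. -/
noncomputable def mCurl (P : (Fin 3 → ℝ) → Matrix (Fin 3) (Fin 3) ℝ) (x : Fin 3 → ℝ) :
    Matrix (Fin 3) (Fin 3) ℝ :=
  Matrix.of fun i j => vcurl (fun y => P y i) x j

/-- Jacobian matrix of a vector field on `ℝ³`. -/
noncomputable def jac (v : (Fin 3 → ℝ) → Fin 3 → ℝ) (x : Fin 3 → ℝ) :
    Matrix (Fin 3) (Fin 3) ℝ :=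
  Matrix.of fun i j => pd j (fun y => v y i) x

/-- Axial vector of a (skew-symmetric) `3 × 3` matrix: with `A 1 2 = -a₁`,
`A 2 0 = -a₂`, `A 0 1 = -a₃` (so `A 2 1 = a₁`, `A 0 2 = a₂`, `A 1 0 = a₃`). -/
def axl (A : Matrix (Fin 3) (Fin 3) ℝ) : Fin 3 → ℝ :=
  ![A 2 1, A 0 2, A 1 0]

/-- The skew-symmetric matrix `anti a` characterized by `(anti a) ⬝ v = a × v`. -/
def antiM (a : Fin 3 → ℝ) : Matrix (Fin 3) (Fin 3) ℝ :=
  !![0, -a 2, a 1; a 2, 0, -a 0; -a 1, a 0, 0]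

/-- Symmetric part of a matrix. -/
noncomputable def symM (X : Matrix (Fin 3) (Fin 3) ℝ) : Matrix (Fin 3) (Fin 3) ℝ :=
  (1 / 2 : ℝ) • (X + Xᵀ)

/-- Skew-symmetric part of a matrix. -/
noncomputable def skewM (X : Matrix (Fin 3) (Fin 3) ℝ) : Matrix (Fin 3) (Fin 3) ℝ :=
  (1 / 2 : ℝ) • (X - Xᵀ)

/-- Deviatoric (trace-free) part of a matrix. -/
noncomputable def devM (X : Matrix (Fin 3) (Fin 3) ℝ) : Matrix (Fin 3) (Fin 3) ℝ :=
  X - (Matrix.trace X / 3) • (1 : Matrix (Fin 3) (Fin 3) ℝ)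

/-- Frobenius inner product `⟨X, Y⟩ = tr (X Yᵀ)`. -/
noncomputable def minner (X Y : Matrix (Fin 3) (Fin 3) ℝ) : ℝ :=
  Matrix.trace (X * Yᵀ)

/-- Squared Frobenius norm. -/
noncomputable def mnormSq (X : Matrix (Fin 3) (Fin 3) ℝ) : ℝ :=
  minner X X

/-- Squared Euclidean norm of a vector in `ℝ³`. -/
def vnormSq (v : Fin 3 → ℝ) : ℝ :=
  ∑ i, (v i) ^ 2

lemma contDiff_pd {f : (Fin 3 → ℝ) → ℝ} (hf : ContDiff ℝ 2 f) (k : Fin 3) :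
    ContDiff ℝ 1 (pd k f) := by
  have h1 : ContDiff ℝ 1 (fderiv ℝ f) := hf.fderiv_right (le_refl 2)
  exact (ContinuousLinearMap.apply ℝ ℝ (Pi.single k 1 : Fin 3 → ℝ)).contDiff.comp h1

lemma pd_comm {f : (Fin 3 → ℝ) → ℝ} (hf : ContDiff ℝ 2 f) (i j : Fin 3) (x : Fin 3 → ℝ) :
    pd i (pd j f) x = pd j (pd i f) x := by
  have hd : ∀ y, HasFDerivAt f (fderiv ℝ f y) y :=
    fun y => (hf.differentiable (by norm_num)).differentiableAt.hasFDerivAt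
  have h1 : ContDiff ℝ 1 (fderiv ℝ f) := hf.fderiv_right (le_refl 2)
  have hx : HasFDerivAt (fderiv ℝ f) (fderiv ℝ (fderiv ℝ f) x) x :=
    ((h1.differentiable one_ne_zero) x).hasFDerivAt
  have hsymm := second_derivative_symmetric hd hx
  have key : ∀ (a b : Fin 3),
      pd a (pd b f) x = fderiv ℝ (fderiv ℝ f) x (Pi.single a 1) (Pi.single b 1) := by
    intro a b
    have hcomp : HasFDerivAt (fun y => (ContinuousLinearMap.apply ℝ ℝ (Pi.single b 1 : Fin 3 → ℝ)) (fderiv ℝ f y))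
        ((ContinuousLinearMap.apply ℝ ℝ (Pi.single b 1 : Fin 3 → ℝ)).comp (fderiv ℝ (fderiv ℝ f) x)) x :=
      (ContinuousLinearMap.apply ℝ ℝ (Pi.single b 1 : Fin 3 → ℝ)).hasFDerivAt.comp x hx
    have : pd b f = fun y => (ContinuousLinearMap.apply ℝ ℝ (Pi.single b 1 : Fin 3 → ℝ)) (fderiv ℝ f y) := rfl
    rw [pd, this, hcomp.fderiv]
    rfl
  rw [key i j, key j i, hsymm]

lemma pd_neg (f : (Fin 3 → ℝ) → ℝ) (j : Fin 3) (x : Fin 3 → ℝ) :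
    pd j (fun y => -f y) x = -pd j f x := by
  simp [pd, fderiv_neg]

lemma pd_zero (j : Fin 3) (x : Fin 3 → ℝ) :
    pd j (fun _ => (0:ℝ)) x = 0 := by
  simp [pd]

lemma pd_sub {f g : (Fin 3 → ℝ) → ℝ} {x : Fin 3 → ℝ} (hf : DifferentiableAt ℝ f x)
    (hg : DifferentiableAt ℝ g x) (j : Fin 3) :
    pd j (fun y => f y - g y) x = pd j f x - pd j g x := by
  simp [pd, fderiv_fun_sub hf hg]

lemma pd_add {f g : (Fin 3 → ℝ) → ℝ} {x : Fin 3 → ℝ} (hf : DifferentiableAt ℝ f x)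
    (hg : DifferentiableAt ℝ g x) (j : Fin 3) :
    pd j (fun y => f y + g y) x = pd j f x + pd j g x := by
  simp [pd, fderiv_fun_add hf hg]

lemma pd_diffAt {f : (Fin 3 → ℝ) → ℝ} (hf : ContDiff ℝ 2 f) (k : Fin 3) (x : Fin 3 → ℝ) :
    DifferentiableAt ℝ (pd k f) x :=
  ((contDiff_pd hf k).differentiable one_ne_zero) x

lemma pd_pdsub {f g : (Fin 3 → ℝ) → ℝ} (hf : ContDiff ℝ 2 f) (hg : ContDiff ℝ 2 g)
    (j k l : Fin 3) (x : Fin 3 → ℝ) :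
    pd j (fun y => pd k f y - pd l g y) x = pd j (pd k f) x - pd j (pd l g) x :=
  pd_sub (pd_diffAt hf k x) (pd_diffAt hg l x) j

lemma pd_pd_neg (f : (Fin 3 → ℝ) → ℝ) (j k : Fin 3) (x : Fin 3 → ℝ) :
    pd j (pd k (fun y => -f y)) x = -pd j (pd k f) x := by
  have h : pd k (fun y => -f y) = fun y => -pd k f y := funext fun y => pd_neg f k y
  rw [h, pd_neg]

lemma pd_pd_zero (j k : Fin 3) (x : Fin 3 → ℝ) :
    pd j (pd k (fun _ => (0:ℝ))) x = 0 := by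
  have h : pd k (fun _ => (0:ℝ)) = fun _ => (0:ℝ) := funext fun y => pd_zero k y
  rw [h, pd_zero]

/-- For a skew-symmetric matrix field A,
Curl((Curl A)ᵀ) = −anti(∇(div(axl A))). -/
theorem curl_curl_transpose_skew_eq
    (A : (Fin 3 → ℝ) → Matrix (Fin 3) (Fin 3) ℝ)
    (hA_skew : ∀ x, (A x)ᵀ = -(A x))
    (hA_diff : ∀ i j, ContDiff ℝ 2 (fun y => A y i j)) :
    ∀ x : Fin 3 → ℝ,
      mCurl (fun y => (mCurl A y)ᵀ) x =
        -antiM (grad3 (fun y => vdiv (fun z => axl (A z)) y) x) := by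
  intro x
  have e12 : (fun y => A y 1 2) = (fun y => -A y 2 1) := by
    funext y; have h := congrFun (congrFun (hA_skew y) 2) 1
    simpa using h
  have e20 : (fun y => A y 2 0) = (fun y => -A y 0 2) := by
    funext y; have h := congrFun (congrFun (hA_skew y) 0) 2
    simpa using h
  have e01 : (fun y => A y 0 1) = (fun y => -A y 1 0) := by
    funext y; have h := congrFun (congrFun (hA_skew y) 1) 0
    simpa using h
  have e00 : (fun y => A y 0 0) = (fun _ => (0:ℝ)) := by
    funext y; have h := congrFun (congrFun (hA_skew y) 0) 0
    simp at h; linarith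
  have e11 : (fun y => A y 1 1) = (fun _ => (0:ℝ)) := by
    funext y; have h := congrFun (congrFun (hA_skew y) 1) 1
    simp at h; linarith
  have e22 : (fun y => A y 2 2) = (fun _ => (0:ℝ)) := by
    funext y; have h := congrFun (congrFun (hA_skew y) 2) 2
    simp at h; linarith
  ext i j
  have HS : ∀ (j k l m n p q : Fin 3) (y : Fin 3 → ℝ),
      pd j (fun z => pd k (fun w => A w m n) z - pd l (fun w => A w p q) z) y =
        pd j (pd k (fun w => A w m n)) y - pd j (pd l (fun w => A w p q)) y :=
    fun j k l m n p q y => pd_pdsub (hA_diff m n) (hA_diff p q) j k l y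
  have HA : ∀ (j : Fin 3) (y : Fin 3 → ℝ),
      pd j (fun z => pd 0 (fun w => A w 2 1) z + pd 1 (fun w => A w 0 2) z
              + pd 2 (fun w => A w 1 0) z) y =
        pd j (pd 0 (fun w => A w 2 1)) y + pd j (pd 1 (fun w => A w 0 2)) y
          + pd j (pd 2 (fun w => A w 1 0)) y := by
    intro j y
    rw [pd_add ((pd_diffAt (hA_diff 2 1) 0 y).fun_add (pd_diffAt (hA_diff 0 2) 1 y))
        (pd_diffAt (hA_diff 1 0) 2 y),
      pd_add (pd_diffAt (hA_diff 2 1) 0 y) (pd_diffAt (hA_diff 0 2) 1 y)]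
  have HC : ∀ (m n i j : Fin 3),
      pd i (pd j (fun w => A w m n)) x = pd j (pd i (fun w => A w m n)) x :=
    fun m n i j => pd_comm (hA_diff m n) i j x
  fin_cases i <;> fin_cases j <;>
    (simp [mCurl, vcurl, grad3, vdiv, axl, antiM, Fin.sum_univ_three]
     simp only [HS, HA]
     simp only [e12, e20, e01, e00, e11, e22]
     simp only [pd_pd_neg, pd_pd_zero]
     simp only [HC]
     ring)
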